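/- Let g be a flat Lie algebra with orthogonal decomposition g = s ⊕ z ⊕ d where d = [g,g] is abelian of dimension 2m, z is the center, s is abelian, with structure constants [s_i, d_{2j−1}] = λ_{ij} d_{2j}, [s_i, d_{2j}] = −λ_{ij} d_{2j−1}. If ξ(x) = ad_x r is a coboundary (r ∈ Λ²g) satisfying the metaflatness condition ad_{s_ℓ}² ξ(s_k) = 0 for all k, ℓ, and g is nondegenerate (for all i ≠ j in {1,...,m} there exists k with λ_{ki}² ≠ λ_{kj}²), then ξ(s_k) = 0 for all k. -/

import Mathlib

open ExteriorAlgebra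

open TensorProduct

section AuxStmt16

variable {L N : Type*} [AddCommGroup L] [Module ℝ L] [AddCommGroup N] [Module ℝ N]

/-- An alternating map on `Fin 2` from a bilinear map vanishing on the diagonal. -/
def stmt16AltOfBilin (F : L →ₗ[ℝ] L →ₗ[ℝ] N) (hF : ∀ x, F x x = 0) :
    L [⋀^Fin 2]→ₗ[ℝ] N where
  toMultilinearMap :=
    { toFun := fun v => F (v 0) (v 1)
      map_update_add' := fun v i x y => by
        have h01 : (1 : Fin 2) ≠ 0 := Fin.ne_of_val_ne (by norm_num)
        fin_cases i <;>
          simp [Function.update_self, Function.update_of_ne, h01, h01.symm]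
      map_update_smul' := fun v i c x => by
        have h01 : (1 : Fin 2) ≠ 0 := Fin.ne_of_val_ne (by norm_num)
        fin_cases i <;>
          simp [Function.update_self, Function.update_of_ne, h01, h01.symm] }
  map_eq_zero_of_eq' := fun v i j hv hij => by
    fin_cases i <;> fin_cases j <;> simp_all [hF]

def stmt16AltFam (F : L →ₗ[ℝ] L →ₗ[ℝ] N) (hF : ∀ x, F x x = 0) :
    ∀ i : ℕ, L [⋀^Fin i]→ₗ[ℝ] N
  | 2 => stmt16AltOfBilin F hF
  | _ => 0

lemma stmt16_lift_fam (F : L →ₗ[ℝ] L →ₗ[ℝ] N) (hF : ∀ x, F x x = 0) (x y : L) :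
    liftAlternating (stmt16AltFam F hF) (ι ℝ x * ι ℝ y) = F x y := by
  rw [liftAlternating_ι_mul, liftAlternating_ι]
  simp [stmt16AltFam, stmt16AltOfBilin]

variable {ι κ : Type*} [Fintype ι] [Fintype κ] {M M' : Type*}
  [AddCommGroup M] [Module ℝ M] [AddCommGroup M'] [Module ℝ M']

noncomputable def stmt16IP (c : Module.Basis ι ℝ M) : M →ₗ[ℝ] M →ₗ[ℝ] ℝ :=
  ∑ i, (c.coord i).smulRight (c.coord i)

lemma stmt16IP_apply (c : Module.Basis ι ℝ M) (x y : M) :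
    stmt16IP c x y = ∑ i, c.repr x i * c.repr y i := by
  simp [stmt16IP, LinearMap.sum_apply, Module.Basis.coord_apply, mul_comm]

lemma stmt16IP_self_eq_zero {c : Module.Basis ι ℝ M} {v : M} (h : stmt16IP c v v = 0) : v = 0 := by
  rw [stmt16IP_apply] at h
  have h2 := (Finset.sum_eq_zero_iff_of_nonneg
    (fun i _ => mul_self_nonneg (c.repr v i))).1 h
  have hv : c.repr v = 0 := Finsupp.ext fun i =>
    mul_self_eq_zero.mp (h2 i (Finset.mem_univ i))
  exact c.repr.map_eq_zero_iff.mp hv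

lemma stmt16IP_basis (c : Module.Basis ι ℝ M) [DecidableEq ι] (i j : ι) :
    stmt16IP c (c i) (c j) = if i = j then 1 else 0 := by
  rw [stmt16IP_apply]
  simp [Module.Basis.repr_self, Finsupp.single_apply, mul_ite, ite_mul, eq_comm]

lemma stmt16IP_tmul (c₁ : Module.Basis ι ℝ M) (c₂ : Module.Basis κ ℝ M') (x x' : M) (y y' : M') :
    stmt16IP (c₁.tensorProduct c₂) (x ⊗ₜ y) (x' ⊗ₜ y')
      = stmt16IP c₁ x x' * stmt16IP c₂ y y' := by
  rw [stmt16IP_apply, stmt16IP_apply, stmt16IP_apply, Finset.sum_mul_sum,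
    Fintype.sum_prod_type]
  refine Finset.sum_congr rfl fun i _ => Finset.sum_congr rfl fun j _ => ?_
  simp [Module.Basis.tensorProduct_repr_tmul_apply, smul_eq_mul]
  ring

lemma stmt16_skew_ext [DecidableEq ι] (c : Module.Basis ι ℝ M) (D : M →ₗ[ℝ] M)
    (h : ∀ a a', stmt16IP c (D (c a)) (c a') + stmt16IP c (c a) (D (c a')) = 0) :
    ∀ x y, stmt16IP c (D x) y + stmt16IP c x (D y) = 0 := by
  have heq : (stmt16IP c) ∘ₗ D + (stmt16IP c).compl₂ D = 0 := by
    refine c.ext fun a => c.ext fun a' => ?_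
    simpa [LinearMap.add_apply, LinearMap.comp_apply, LinearMap.compl₂_apply] using h a a'
  intro x y
  simpa [LinearMap.add_apply, LinearMap.comp_apply, LinearMap.compl₂_apply] using
    LinearMap.congr_fun (LinearMap.congr_fun heq x) y

end AuxStmt16


set_option maxHeartbeats 1600000 in
/-- Let `g = span{s_i} ⊕ span{z_i} ⊕ span{d_1,…,d_{2m}}` be a flat Lie
algebra with `d = [g,g]` abelian, `z` central, `s` abelian, and structure constants
`[s_i, d_{2j−1}] = λ_{ij} d_{2j}`, `[s_i, d_{2j}] = −λ_{ij} d_{2j−1}` (here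
`p j = d_{2j−1}`, `q j = d_{2j}`). If `ξ(x) = ad_x r` is a coboundary (`r ∈ Λ²g`)
satisfying the metaflatness condition `ad_{s_ℓ}² ξ(s_k) = 0` for all `k, ℓ`, and `g` is
nondegenerate, then `ξ(s_k) = 0` for all `k`. -/
theorem stmt_16 {L : Type*} [LieRing L] [LieAlgebra ℝ L] {k0 l0 m : ℕ}
    (s : Fin k0 → L) (z : Fin l0 → L) (p q : Fin m → L)
    (lam : Fin k0 → Fin m → ℝ)
    (b : Module.Basis (Fin k0 ⊕ Fin l0 ⊕ Fin m ⊕ Fin m) ℝ L)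
    (hbs : ∀ i, b (Sum.inl i) = s i)
    (hbz : ∀ i, b (Sum.inr (Sum.inl i)) = z i)
    (hbp : ∀ i, b (Sum.inr (Sum.inr (Sum.inl i))) = p i)
    (hbq : ∀ i, b (Sum.inr (Sum.inr (Sum.inr i))) = q i)
    (hss : ∀ i j, ⁅s i, s j⁆ = (0 : L))
    (hz : ∀ i, ∀ y : L, ⁅z i, y⁆ = 0)
    (hsp : ∀ i j, ⁅s i, p j⁆ = lam i j • q j)
    (hsq : ∀ i j, ⁅s i, q j⁆ = -(lam i j • p j))
    (hpp : ∀ i j, ⁅p i, p j⁆ = (0 : L))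
    (hpq : ∀ i j, ⁅p i, q j⁆ = (0 : L))
    (hqq : ∀ i j, ⁅q i, q j⁆ = (0 : L))
    -- the derivation extension of `ad` to bivectors
    (A : L →ₗ[ℝ] ExteriorAlgebra ℝ L →ₗ[ℝ] ExteriorAlgebra ℝ L)
    (hA : ∀ x u v : L, A x (ι ℝ u * ι ℝ v) = ι ℝ ⁅x, u⁆ * ι ℝ v + ι ℝ u * ι ℝ ⁅x, v⁆)
    (r : ExteriorAlgebra ℝ L)
    (hr : r ∈ Submodule.span ℝ
      {w : ExteriorAlgebra ℝ L | ∃ x y : L, w = ι ℝ x * ι ℝ y})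
    -- metaflatness: `ad_{s_ℓ}² ξ(s_k) = 0`
    (hmeta : ∀ k l : Fin k0, A (s l) (A (s l) (A (s k) r)) = 0)
    -- nondegeneracy
    (hnd : ∀ i j : Fin m, i ≠ j → ∃ k : Fin k0, (lam k i) ^ 2 ≠ (lam k j) ^ 2) :
    ∀ k : Fin k0, A (s k) r = 0 := by
  classical
  intro k
  -- the multiplication bilinear map and the projection π : L ⊗ L → Λ L
  let E := ExteriorAlgebra ℝ L
  let μ : L →ₗ[ℝ] L →ₗ[ℝ] E := LinearMap.mk₂ ℝ (fun x y => ι ℝ x * ι ℝ y)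
    (fun x x' y => by rw [map_add, add_mul])
    (fun c x y => by rw [map_smul, smul_mul_assoc])
    (fun x y y' => by rw [map_add, mul_add])
    (fun c x y => by rw [map_smul, mul_smul_comm])
  let π : L ⊗[ℝ] L →ₗ[ℝ] E := TensorProduct.lift μ
  have hπ : ∀ x y : L, π (x ⊗ₜ y) = ι ℝ x * ι ℝ y := fun x y => rfl
  obtain ⟨t, ht⟩ : ∃ t, π t = r := by
    have hle : Submodule.span ℝ {w : E | ∃ x y : L, w = ι ℝ x * ι ℝ y}
        ≤ LinearMap.range π := by
      rw [Submodule.span_le]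
      rintro w ⟨x, y, rfl⟩
      exact ⟨x ⊗ₜ y, hπ x y⟩
    exact hle hr
  -- ad (s k) and its derivation extension on L ⊗ L
  let D : L →ₗ[ℝ] L := LieAlgebra.ad ℝ L (s k)
  have hD : ∀ x : L, D x = ⁅s k, x⁆ := fun x => rfl
  let T : L ⊗[ℝ] L →ₗ[ℝ] L ⊗[ℝ] L :=
    TensorProduct.map D LinearMap.id + TensorProduct.map LinearMap.id D
  have hT : ∀ x y : L, T (x ⊗ₜ y) = D x ⊗ₜ y + x ⊗ₜ D y := fun x y => by
    simp [T, TensorProduct.map_tmul]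
  have hcompat : ∀ w, A (s k) (π w) = π (T w) := by
    have heq : (A (s k)) ∘ₗ π = π ∘ₗ T := TensorProduct.ext' fun x y => by
      simp only [LinearMap.comp_apply, hπ, hT, map_add, hA, hD]
    exact fun w => LinearMap.congr_fun heq w
  -- the flip τ
  let τ : L ⊗[ℝ] L →ₗ[ℝ] L ⊗[ℝ] L := (TensorProduct.comm ℝ L L).toLinearMap
  have hτ : ∀ x y : L, τ (x ⊗ₜ y) = y ⊗ₜ x := fun x y => rfl
  have hπτ : ∀ w, π (τ w) = - π w := by
    have heq : π ∘ₗ τ = -π := TensorProduct.ext' fun x y => by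
      simp only [LinearMap.comp_apply, LinearMap.neg_apply, hτ, hπ]
      exact eq_neg_of_add_eq_zero_left (ExteriorAlgebra.ι_add_mul_swap y x)
    exact fun w => LinearMap.congr_fun heq w
  have hTτ : ∀ w, τ (T w) = T (τ w) := by
    have heq : τ ∘ₗ T = T ∘ₗ τ := TensorProduct.ext' fun x y => by
      simp only [LinearMap.comp_apply, hT, hτ, map_add]
      abel
    exact fun w => LinearMap.congr_fun heq w
  -- the retraction Φ : Λ L → L ⊗ L
  let F2 : L →ₗ[ℝ] L →ₗ[ℝ] L ⊗[ℝ] L := LinearMap.mk₂ ℝ (fun x y => x ⊗ₜ y - y ⊗ₜ x)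
    (fun x x' y => by
      simp [TensorProduct.add_tmul, TensorProduct.tmul_add]; abel)
    (fun c x y => by
      simp [TensorProduct.smul_tmul', TensorProduct.tmul_smul, smul_sub])
    (fun x y y' => by
      simp [TensorProduct.add_tmul, TensorProduct.tmul_add]; abel)
    (fun c x y => by
      simp [TensorProduct.smul_tmul', TensorProduct.tmul_smul, smul_sub])
  have hF2 : ∀ x, F2 x x = 0 := fun x => sub_self _
  let Φ : E →ₗ[ℝ] L ⊗[ℝ] L := liftAlternating (stmt16AltFam F2 hF2)
  have hΦπ : ∀ w, Φ (π w) = w - τ w := by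
    have heq : Φ ∘ₗ π = LinearMap.id - τ := TensorProduct.ext' fun x y => by
      simp only [LinearMap.comp_apply, LinearMap.sub_apply, LinearMap.id_apply, hπ, hτ]
      rw [stmt16_lift_fam]
      rfl
    exact fun w => LinearMap.congr_fun heq w
  -- metaflatness gives T³ u = 0 for the antisymmetrisation u of t
  set u := t - τ t with hu
  have hT3u : T (T (T u)) = 0 := by
    have h3 : π (T (T (T t))) = 0 := by
      rw [← hcompat, ← hcompat, ← hcompat, ht]
      exact hmeta k k
    have h4 : Φ (π (T (T (T t)))) = 0 := by rw [h3, map_zero]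
    rw [hΦπ] at h4
    rw [hu]
    simp only [map_sub]
    rw [← hTτ, ← hTτ, ← hTτ]
    exact h4
  -- D is skew w.r.t. the Euclidean form of the basis b
  have hDb1 : ∀ i, D (b (Sum.inl i)) = 0 := fun i => by rw [hD, hbs, hss]
  have hDb2 : ∀ i, D (b (Sum.inr (Sum.inl i))) = 0 := fun i => by
    rw [hD, hbz, ← lie_skew, hz, neg_zero]
  have hDb3 : ∀ j, D (b (Sum.inr (Sum.inr (Sum.inl j))))
      = lam k j • b (Sum.inr (Sum.inr (Sum.inr j))) := fun j => by
    rw [hD, hbp, hsp, hbq]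
  have hDb4 : ∀ j, D (b (Sum.inr (Sum.inr (Sum.inr j))))
      = -(lam k j • b (Sum.inr (Sum.inr (Sum.inl j)))) := fun j => by
    rw [hD, hbq, hsq, hbp]
  have hDskew : ∀ x y : L, stmt16IP b (D x) y + stmt16IP b x (D y) = 0 := by
    refine stmt16_skew_ext b D ?_
    intro a a'
    rcases a with i | i | j | j <;> rcases a' with i' | i' | j' | j' <;>
      simp only [hDb1, hDb2, hDb3, hDb4, map_zero, LinearMap.zero_apply, map_smul,
        map_neg, LinearMap.smul_apply, LinearMap.neg_apply, stmt16IP_basis,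
        smul_eq_mul, add_zero, zero_add, neg_zero, Sum.inr.injEq, Sum.inl.injEq,
        reduceCtorEq, if_false, mul_zero, mul_ite, mul_one, neg_add_rev, ite_false] <;>
      split_ifs with h <;> first | rfl | (subst h; ring) | ring
  -- T is skew w.r.t. the Euclidean form of the basis b ⊗ b
  have hTskew : ∀ w w', stmt16IP (b.tensorProduct b) (T w) w'
      + stmt16IP (b.tensorProduct b) w (T w') = 0 := by
    have heq : (stmt16IP (b.tensorProduct b)) ∘ₗ T
        + (stmt16IP (b.tensorProduct b)).compl₂ T = 0 := by
      refine TensorProduct.ext' fun x y => ?_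
      refine TensorProduct.ext' fun x' y' => ?_
      simp only [LinearMap.add_apply, LinearMap.comp_apply, LinearMap.compl₂_apply,
        LinearMap.zero_apply, hT, map_add, LinearMap.add_apply, stmt16IP_tmul]
      linear_combination stmt16IP b y y' * hDskew x x' + stmt16IP b x x' * hDskew y y'
    exact fun w w' => LinearMap.congr_fun (LinearMap.congr_fun heq w) w'
  -- from T³ u = 0 deduce T u = 0
  have hT2u : T (T u) = 0 := by
    have h1 := hTskew (T (T u)) (T u)
    simp only [hT3u, map_zero, LinearMap.zero_apply, zero_add] at h1
    exact stmt16IP_self_eq_zero h1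
  have hTu : T u = 0 := by
    have h1 := hTskew (T u) u
    simp only [hT2u, map_zero, LinearMap.zero_apply, zero_add] at h1
    exact stmt16IP_self_eq_zero h1
  -- conclude
  have hπTt : π (T t) = 0 := by
    have h0 : π (T u) = 0 := by rw [hTu, map_zero]
    have hexp : π (T u) = π (T t) + π (T t) := by
      rw [hu, map_sub, map_sub, ← hTτ, hπτ, sub_neg_eq_add]
    rw [hexp] at h0
    have h2 : (2 : ℝ) • π (T t) = 0 := by rw [two_smul]; exact h0
    rcases smul_eq_zero.mp h2 with h | h
    · norm_num at h
    · exact h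
  rw [← ht, hcompat]
  exact hπTt
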